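/- Let 𝕂 be a field of characteristic 0 and σ = Σ_{i=1}^{r} ωᵢ e_{ξᵢ} with ωᵢ ∈ 𝕂 ∖ {0} and ξ₁,…,ξ_r ∈ 𝕂ⁿ pairwise distinct. Then there exist polynomials u₁,…,u_r ∈ 𝕂[x] with uᵢ(ξⱼ) = δ_{ij}; for any such polynomials, their classes form a basis of A_σ which is orthogonal for the inner product ⟨p,q⟩_σ = σ(p·q), with σ(uᵢ·uⱼ) = δ_{ij} ωᵢ and σ(uᵢ) = ωᵢ for all i, j. -/

import Mathlib

open MvPolynomial

namespace PolyExp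

variable {K : Type*} [Field K] {n : ℕ}

/-- The iterated partial derivative operator `∂^β` on polynomials. -/
noncomputable def pderivPow (β : Fin n →₀ ℕ) :
    Module.End K (MvPolynomial (Fin n) K) :=
  (List.ofFn fun i : Fin n =>
    ((MvPolynomial.pderiv i).toLinearMap : Module.End K (MvPolynomial (Fin n) K)) ^ (β i)).prod

/-- The constant coefficient differential operator `ω(∂) = Σ_β ω_β ∂^β`. -/
noncomputable def diffOp (ω : MvPolynomial (Fin n) K) :
    Module.End K (MvPolynomial (Fin n) K) :=
  ∑ β ∈ ω.support, ω.coeff β • pderivPow β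

/-- The evaluation linear form `e_ξ : p ↦ p(ξ)`. -/
noncomputable def evalDual (ξ : Fin n → K) : Module.Dual K (MvPolynomial (Fin n) K) :=
  (MvPolynomial.aeval ξ).toLinearMap

/-- The polynomial-exponential linear form `ω·e_ξ : p ↦ (ω(∂)p)(ξ)`. -/
noncomputable def polyExpDual (ω : MvPolynomial (Fin n) K) (ξ : Fin n → K) :
    Module.Dual K (MvPolynomial (Fin n) K) :=
  evalDual ξ ∘ₗ diffOp ω

/-- The Hankel operator `H_σ : p ↦ (q ↦ σ(p·q))`. -/
noncomputable def hankel (σ : Module.Dual K (MvPolynomial (Fin n) K)) :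
    MvPolynomial (Fin n) K →ₗ[K] Module.Dual K (MvPolynomial (Fin n) K) :=
  (LinearMap.llcomp K (MvPolynomial (Fin n) K) (MvPolynomial (Fin n) K) K σ) ∘ₗ
    (LinearMap.mul K (MvPolynomial (Fin n) K))

/-- `μ(ω)`: the dimension of the span of all partial derivatives of `ω`. -/
noncomputable def mu (ω : MvPolynomial (Fin n) K) : ℕ :=
  Module.finrank K (Submodule.span K (Set.range fun β : Fin n →₀ ℕ => pderivPow β ω))

/-- The kernel `I_σ` of the Hankel operator, as an ideal. -/
def hankelKer (σ : Module.Dual K (MvPolynomial (Fin n) K)) : Ideal (MvPolynomial (Fin n) K) where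
  carrier := {p | ∀ q, σ (p * q) = 0}
  add_mem' := by
    intro a b ha hb q
    rw [add_mul, map_add, ha q, hb q, add_zero]
  zero_mem' := by
    intro q
    rw [zero_mul, map_zero]
  smul_mem' := by
    intro c p hp q
    rw [smul_eq_mul, mul_comm c p, mul_assoc]
    exact hp (c * q)

end PolyExp

set_option synthInstance.maxHeartbeats 1000000 in
set_option maxHeartbeats 1000000 in
/-- If `σ = Σᵢ ωᵢ e_{ξᵢ}` with nonzero scalar weights and pairwise
distinct points, then interpolation polynomials `uᵢ` with `uᵢ(ξⱼ) = δᵢⱼ` exist; the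
classes of any such `u₁,…,u_r` form a basis of `A_σ`, orthogonal for `⟨p,q⟩_σ = σ(pq)`,
with `σ(uᵢuⱼ) = δᵢⱼ ωᵢ` and `σ(uᵢ) = ωᵢ`. -/
theorem statement13 {K : Type*} [Field K] [CharZero K] {n : ℕ}
    (r : ℕ) (ξ : Fin r → Fin n → K) (hξ : Function.Injective ξ)
    (ω : Fin r → K) (hω : ∀ i, ω i ≠ 0)
    (σ : Module.Dual K (MvPolynomial (Fin n) K))
    (hσ : σ = ∑ i, ω i • PolyExp.evalDual (ξ i)) :
    (∃ u : Fin r → MvPolynomial (Fin n) K,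
      ∀ i j, MvPolynomial.aeval (ξ j) (u i) = if i = j then 1 else 0) ∧
    (∀ u : Fin r → MvPolynomial (Fin n) K,
      (∀ i j, MvPolynomial.aeval (ξ j) (u i) = if i = j then 1 else 0) →
      LinearIndependent K (fun i => Ideal.Quotient.mk (PolyExp.hankelKer σ) (u i)) ∧
      Submodule.span K (Set.range fun i => Ideal.Quotient.mk (PolyExp.hankelKer σ) (u i)) = ⊤ ∧
      (∀ i j, σ (u i * u j) = if i = j then ω i else 0) ∧
      (∀ i, σ (u i) = ω i)) := by
  classical
  have hσ' : ∀ p, σ p = ∑ i, ω i * MvPolynomial.aeval (ξ i) p := by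
    intro p
    rw [hσ]
    simp [PolyExp.evalDual]
  have hmem : ∀ p : MvPolynomial (Fin n) K,
      p ∈ PolyExp.hankelKer σ ↔ ∀ q, σ (p * q) = 0 := fun p => Iff.rfl
  -- existence of interpolation polynomials
  have hexst : ∃ u : Fin r → MvPolynomial (Fin n) K,
      ∀ i j, MvPolynomial.aeval (ξ j) (u i) = if i = j then 1 else 0 := by
    set v : Fin r → Fin r → MvPolynomial (Fin n) K := fun i j =>
      if h : ∃ a, ξ i a ≠ ξ j a then
        MvPolynomial.C (ξ i h.choose - ξ j h.choose)⁻¹ *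
          (MvPolynomial.X h.choose - MvPolynomial.C (ξ j h.choose)) else 1 with hv
    have hne : ∀ i j : Fin r, i ≠ j → ∃ a, ξ i a ≠ ξ j a := by
      intro i j hij
      by_contra h
      push_neg at h
      exact hij (hξ (funext h))
    refine ⟨fun i => ∏ j ∈ Finset.univ.erase i, v i j, ?_⟩
    intro i j
    by_cases hij : i = j
    · subst hij
      rw [if_pos rfl, map_prod]
      apply Finset.prod_eq_one
      intro m hm
      have him : i ≠ m := (Finset.ne_of_mem_erase hm).symm
      have hex := hne i m him
      have hspec := hex.choose_spec
      simp only [hv, dif_pos hex, map_mul, map_sub, MvPolynomial.aeval_C,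
        MvPolynomial.aeval_X, Algebra.algebraMap_self, RingHom.id_apply]
      rw [inv_mul_cancel₀ (sub_ne_zero.mpr hspec)]
    · rw [if_neg hij, map_prod]
      apply Finset.prod_eq_zero (Finset.mem_erase.mpr ⟨Ne.symm hij, Finset.mem_univ j⟩)
      have hex := hne i j hij
      simp only [hv, dif_pos hex, map_mul, map_sub, MvPolynomial.aeval_C,
        MvPolynomial.aeval_X]
      simp
  refine ⟨hexst, ?_⟩
  intro u hu
  -- orthogonality
  have horth : ∀ i j, σ (u i * u j) = if i = j then ω i else 0 := by
    intro i j
    rw [hσ']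
    simp only [map_mul, hu]
    by_cases h : i = j
    · subst h
      rw [if_pos rfl, Finset.sum_eq_single i]
      · simp
      · intro k _ hk
        simp [Ne.symm hk]
      · simp
    · rw [if_neg h, Finset.sum_eq_zero]
      intro k _
      by_cases h1 : i = k
      · subst h1
        have : j ≠ i := fun hh => h hh.symm
        simp [this]
      · simp [h1]
  have heval : ∀ i, σ (u i) = ω i := by
    intro i
    rw [hσ', Finset.sum_eq_single i]
    · simp [hu]
    · intro k _ hk
      simp [hu, Ne.symm hk]
    · simp
  -- key: p - Σ p(ξᵢ) uᵢ ∈ I_σ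
  have hker : ∀ p : MvPolynomial (Fin n) K,
      (p - ∑ i, MvPolynomial.aeval (ξ i) p • u i) ∈ PolyExp.hankelKer σ := by
    intro p
    rw [hmem]
    intro q
    rw [hσ', Finset.sum_eq_zero]
    intro k _
    have : MvPolynomial.aeval (ξ k) (p - ∑ i, MvPolynomial.aeval (ξ i) p • u i) = 0 := by
      rw [map_sub, map_sum]
      simp only [map_smul, hu, smul_eq_mul, mul_ite, mul_one, mul_zero]
      rw [Finset.sum_ite_eq' Finset.univ k (fun i => MvPolynomial.aeval (ξ i) p)]
      simp
    rw [map_mul, this, zero_mul, mul_zero]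
  constructor
  · -- linear independence
    rw [Fintype.linearIndependent_iff]
    intro g hg j
    have hmk : Ideal.Quotient.mk (PolyExp.hankelKer σ) (∑ i, g i • u i) = 0 := by
      rw [map_sum]
      simpa only [← Ideal.Quotient.mkₐ_eq_mk (R₁ := K), map_smul] using hg
    have hker' : (∑ i, g i • u i) ∈ PolyExp.hankelKer σ :=
      (Ideal.Quotient.eq_zero_iff_mem).mp hmk
    have := (hmem _).mp hker' (u j)
    rw [Finset.sum_mul, map_sum] at this
    simp only [smul_mul_assoc, map_smul, horth, smul_eq_mul, mul_ite, mul_zero] at this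
    rw [Finset.sum_ite_eq' Finset.univ j (fun i => g i * ω i)] at this
    simp only [Finset.mem_univ, if_true] at this
    exact (mul_eq_zero.mp this).resolve_right (hω j)
  refine ⟨?_, horth, heval⟩
  -- spanning
  rw [Submodule.eq_top_iff']
  intro x
  obtain ⟨p, rfl⟩ := Ideal.Quotient.mk_surjective x
  have : Ideal.Quotient.mk (PolyExp.hankelKer σ) p =
      ∑ i, MvPolynomial.aeval (ξ i) p • Ideal.Quotient.mk (PolyExp.hankelKer σ) (u i) := by
    rw [Ideal.Quotient.eq.mpr (hker p)]
    simp only [← Ideal.Quotient.mkₐ_eq_mk (R₁ := K), map_sum, map_smul]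
  rw [this]
  exact Submodule.sum_mem _ fun i _ =>
    Submodule.smul_mem _ _ (Submodule.subset_span ⟨i, rfl⟩)
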